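/- Let N ≥ 4 be an integer, Δθ = 2π/N, and let indices i be taken modulo N. Let d : I → (ZMod N → ℝ) be differentiable on an interval I and set ω_i(t) = -ḋ_i(t). Define L_i(t) = (d_{i+1}(t) + d_{i-1}(t))·csc(Δθ) - 2·d_i(t)·cot(Δθ) and A(t) = (1/2)·∑_{i=0}^{N-1} d_i(t)·L_i(t). Then for all t ∈ I, Ȧ(t) = - ∑_{i=0}^{N-1} ω_i(t)·L_i(t). -/

import Mathlib

open Real

/-- If the support distances `dᵢ` of the polygon evolve with `ḋᵢ = -ωᵢ`, the side
lengths are `Lᵢ = (d_{i+1} + d_{i-1}) csc Δθ - 2 dᵢ cot Δθ` and the enclosed area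
is `A = (1/2) ∑ᵢ dᵢ Lᵢ`, then `Ȧ = - ∑ᵢ ωᵢ Lᵢ`. -/
theorem stmt6 (N : ℕ) [NeZero N] (hN : 4 ≤ N) (Δθ : ℝ) (hΔθ : Δθ = 2 * π / N)
    (I : Set ℝ) (d d' : ℝ → ZMod N → ℝ)
    (hd : ∀ t ∈ I, ∀ i, HasDerivAt (fun s => d s i) (d' t i) t)
    (ω : ℝ → ZMod N → ℝ) (hω : ∀ t i, ω t i = -d' t i)
    (L : ℝ → ZMod N → ℝ)
    (hL : ∀ t i, L t i = (d t (i + 1) + d t (i - 1)) * (1 / Real.sin Δθ)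
        - 2 * d t i * (Real.cos Δθ / Real.sin Δθ))
    (A : ℝ → ℝ) (hA : ∀ t, A t = (1 / 2) * ∑ i : ZMod N, d t i * L t i) :
    ∀ t ∈ I, HasDerivAt A (- ∑ i : ZMod N, ω t i * L t i) t := by
  intro t ht
  set c1 : ℝ := 1 / Real.sin Δθ with hc1
  set c2 : ℝ := Real.cos Δθ / Real.sin Δθ with hc2
  have hEq : A = fun s => (1/2:ℝ) * ∑ i : ZMod N,
      d s i * ((d s (i+1) + d s (i-1)) * c1 - 2 * d s i * c2) := by
    funext s
    rw [hA]
    congr 1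
    refine Finset.sum_congr rfl fun i _ => ?_
    rw [hL]
  have hder : HasDerivAt (fun s => (1/2:ℝ) * ∑ i : ZMod N,
      d s i * ((d s (i+1) + d s (i-1)) * c1 - 2 * d s i * c2))
      ((1/2:ℝ) * ∑ i : ZMod N,
        (d' t i * ((d t (i+1) + d t (i-1)) * c1 - 2 * d t i * c2)
        + d t i * ((d' t (i+1) + d' t (i-1)) * c1 - 2 * d' t i * c2))) t := by
    apply HasDerivAt.const_mul
    apply HasDerivAt.fun_sum
    intro i _
    exact (hd t ht i).mul
      ((((hd t ht (i+1)).add (hd t ht (i-1))).mul_const c1).sub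
        (((hd t ht i).const_mul 2).mul_const c2))
  rw [hEq]
  convert hder using 1
  have h1 : ∑ i : ZMod N, d t i * d' t (i+1) = ∑ i : ZMod N, d t (i-1) * d' t i :=
    Fintype.sum_equiv (Equiv.addRight (1 : ZMod N)) _ _ (fun i => by simp)
  have h2 : ∑ i : ZMod N, d t i * d' t (i-1) = ∑ i : ZMod N, d t (i+1) * d' t i :=
    Fintype.sum_equiv (Equiv.subRight (1 : ZMod N)) _ _ (fun i => by simp)
  have expand : ∀ f g : ZMod N → ℝ,
      ∑ i : ZMod N, f i * ((g (i+1) + g (i-1)) * c1 - 2 * g i * c2)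
      = (∑ i : ZMod N, f i * g (i+1)) * c1 + (∑ i : ZMod N, f i * g (i-1)) * c1
        - 2 * (∑ i : ZMod N, f i * g i) * c2 := by
    intro f g
    rw [Finset.sum_mul, Finset.sum_mul, Finset.mul_sum, Finset.sum_mul,
      ← Finset.sum_add_distrib, ← Finset.sum_sub_distrib]
    exact Finset.sum_congr rfl fun i _ => by ring
  have hsym : ∑ i : ZMod N, d t i * ((d' t (i+1) + d' t (i-1)) * c1 - 2 * d' t i * c2)
      = ∑ i : ZMod N, d' t i * ((d t (i+1) + d t (i-1)) * c1 - 2 * d t i * c2) := by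
    rw [expand, expand, h1, h2]
    have h3 : ∑ i : ZMod N, d t i * d' t i = ∑ i : ZMod N, d' t i * d t i :=
      Finset.sum_congr rfl fun i _ => mul_comm _ _
    have h4 : ∑ i : ZMod N, d t (i-1) * d' t i = ∑ i : ZMod N, d' t i * d t (i-1) :=
      Finset.sum_congr rfl fun i _ => mul_comm _ _
    have h5 : ∑ i : ZMod N, d t (i+1) * d' t i = ∑ i : ZMod N, d' t i * d t (i+1) :=
      Finset.sum_congr rfl fun i _ => mul_comm _ _
    rw [h3, h4, h5]; ring
  have hLω : - ∑ i : ZMod N, ω t i * L t i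
      = ∑ i : ZMod N, d' t i * ((d t (i+1) + d t (i-1)) * c1 - 2 * d t i * c2) := by
    rw [← Finset.sum_neg_distrib]
    refine Finset.sum_congr rfl fun i _ => ?_
    rw [hω, hL]; ring
  rw [hLω, Finset.sum_add_distrib, hsym]
  ring
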